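/- The sum of the geometric series identity for f-polynomials of nestohedra: for a connected building set ℬ on a finite set I with |I| ≥ 2, the f-polynomial of the nestohedron N_ℬ satisfies f_ℬ(t) = Σ_{S ⊊ I} t^{|I|−|S|−1} f_{ℬ|_S}(t), where ℬ|_S = {A ∈ ℬ : A ⊆ S}. -/

import Mathlib

open Pointwise Set

variable {I : Type*} [Fintype I] [DecidableEq I]

/-- The face of `P` on which the linear functional `w` attains its maximum. -/
def maxFace (P : Set (I → ℝ)) (w : (I → ℝ) →ₗ[ℝ] ℝ) : Set (I → ℝ) :=
  {x ∈ P | ∀ y ∈ P, w y ≤ w x}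

/-- The dimension of a subset of `ℝ^I`: the dimension of its linear span of differences. -/
noncomputable def polyDim (F : Set (I → ℝ)) : ℕ :=
  Module.finrank ℝ ↥(vectorSpan ℝ F)

/-- The `f`-polynomial of `P`: the sum of `t^{dim F}` over the nonempty faces `F` of `P`. -/
noncomputable def fPoly (P : Set (I → ℝ)) : Polynomial ℝ :=
  ∑ᶠ F ∈ {F : Set (I → ℝ) | (∃ w, F = maxFace P w) ∧ F.Nonempty},
    Polynomial.X ^ polyDim F

/-- The simplex `Δ_J = conv(e_j : j ∈ J)`. -/
def simplexOf (J : Finset I) : Set (I → ℝ) :=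
  convexHull ℝ ((fun j => Pi.single j (1 : ℝ)) '' (↑J : Set I))

/-- The nestohedron of a building set: the Minkowski sum `Σ_{J ∈ ℬ} Δ_J`. -/
noncomputable def nestohedron (ℬ : Finset (Finset I)) : Set (I → ℝ) :=
  ∑ J ∈ ℬ, simplexOf J

/-- A building set on `I`: a collection of nonempty subsets of `I` containing all
singletons and closed under unions of intersecting members. -/
def IsBuildingSet (ℬ : Finset (Finset I)) : Prop :=
  (∀ i : I, {i} ∈ ℬ) ∧ (∅ ∉ ℬ) ∧
    ∀ A ∈ ℬ, ∀ B ∈ ℬ, (A ∩ B).Nonempty → A ∪ B ∈ ℬ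
/-! ### Auxiliary lemmas -/

section Aux
set_option linter.unusedSectionVars false

/-- Abbreviation for the standard basis point. -/
def npt (i : I) : I → ℝ := Pi.single i 1

lemma w_eq_sum (w : (I → ℝ) →ₗ[ℝ] ℝ) (x : I → ℝ) : w x = ∑ i, x i * w (npt i) := by
  rw [LinearMap.pi_apply_eq_sum_univ]
  have h : ∀ i : I, (fun j => if i = j then (1:ℝ) else 0) = npt i := fun i =>
    funext fun j => by simp [npt, Pi.single_apply, eq_comm]
  simp_rw [h, smul_eq_mul]

lemma mem_simplexOf {J : Finset I} {x : I → ℝ} :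
    x ∈ simplexOf J ↔ (∀ i, 0 ≤ x i) ∧ (∀ i ∉ J, x i = 0) ∧ ∑ i, x i = 1 := by
  constructor
  · intro hx
    have hconv : Convex ℝ {y : I → ℝ | (∀ i, 0 ≤ y i) ∧ (∀ i ∉ J, y i = 0) ∧ ∑ i, y i = 1} := by
      intro a ha b hb s t hs ht hst
      refine ⟨fun i => by have := ha.1 i; have := hb.1 i; simp only [Pi.add_apply,
        Pi.smul_apply, smul_eq_mul]; positivity, fun i hi => by
          simp [Pi.add_apply, Pi.smul_apply, ha.2.1 i hi, hb.2.1 i hi], ?_⟩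
      simp only [Pi.add_apply, Pi.smul_apply, smul_eq_mul]
      rw [Finset.sum_add_distrib, ← Finset.mul_sum, ← Finset.mul_sum, ha.2.2, hb.2.2]
      linarith
    have hsub : (fun j => Pi.single j (1 : ℝ)) '' (↑J : Set I) ⊆
        {y : I → ℝ | (∀ i, 0 ≤ y i) ∧ (∀ i ∉ J, y i = 0) ∧ ∑ i, y i = 1} := by
      rintro - ⟨j, hj, rfl⟩
      refine ⟨fun i => by simp [Pi.single_apply]; positivity, fun i hi => ?_, by
        simp [Pi.single_apply]⟩
      simp only []
      rw [Pi.single_apply, if_neg]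
      rintro rfl; exact hi hj
    exact convexHull_min hsub hconv hx
  · rintro ⟨h0, hsupp, hsum⟩
    have hx : x = ∑ i ∈ J, x i • npt i := by
      funext j
      rw [Finset.sum_apply]
      simp only [npt, Pi.smul_apply, Pi.single_apply, smul_eq_mul, mul_ite, mul_one, mul_zero]
      rw [Finset.sum_ite_eq J j (fun i => x i)]
      by_cases hj : j ∈ J
      · simp [hj]
      · simp [hj, hsupp j hj]
    have hsum' : ∑ i ∈ J, x i = 1 := by
      rw [← hsum]
      exact Finset.sum_subset (Finset.subset_univ J) (fun i _ hi => hsupp i hi)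
    rw [hx]
    have := Finset.centerMass_mem_convexHull (t := J) (w := fun i => x i) (z := npt)
      (hw₀ := fun i _ => h0 i) (hws := by rw [hsum']; norm_num)
      (hz := fun i hi => Set.mem_image_of_mem _ hi) (s := (fun j => Pi.single j (1:ℝ)) '' ↑J)
    rw [Finset.centerMass, hsum', inv_one, one_smul] at this
    exact this

lemma npt_mem_simplexOf {J : Finset I} {i : I} : npt i ∈ simplexOf J ↔ i ∈ J := by
  rw [mem_simplexOf]
  constructor
  · rintro ⟨-, hsupp, -⟩
    by_contra hi
    have := hsupp i hi
    simp [npt] at this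
  · intro hi
    refine ⟨fun j => by simp [npt, Pi.single_apply]; positivity, fun j hj => ?_, by
      simp [npt, Pi.single_apply]⟩
    rw [npt, Pi.single_apply, if_neg]
    rintro rfl; exact hj hi

lemma simplexOf_injective {J₁ J₂ : Finset I} (h : simplexOf J₁ = simplexOf J₂) : J₁ = J₂ :=
  Finset.ext fun i => by rw [← npt_mem_simplexOf, h, npt_mem_simplexOf]

lemma simplexOf_nonempty {J : Finset I} (hJ : J.Nonempty) : (simplexOf J).Nonempty := by
  obtain ⟨j, hj⟩ := hJ
  exact ⟨npt j, npt_mem_simplexOf.2 hj⟩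

lemma isCompact_simplexOf (J : Finset I) : IsCompact (simplexOf J) :=
  ((J.finite_toSet.image _).isCompact_convexHull ℝ)

lemma simplexOf_mono {J₁ J₂ : Finset I} (h : J₁ ⊆ J₂) : simplexOf J₁ ⊆ simplexOf J₂ :=
  convexHull_mono (Set.image_mono (by exact_mod_cast h))

end Aux
section Aux2
set_option linter.unusedSectionVars false

lemma sum_sets_compact {α : Type*} (F : Finset α) (f : α → Set (I → ℝ))
    (h : ∀ a ∈ F, IsCompact (f a)) : IsCompact (∑ a ∈ F, f a) := by
  induction F using Finset.cons_induction with
  | empty =>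
    have : (0 : Set (I → ℝ)) = {0} := rfl
    rw [Finset.sum_empty, this]
    exact isCompact_singleton
  | cons a F ha ih =>
    rw [Finset.sum_cons]
    exact (h a (Finset.mem_cons_self a F)).add
      (ih fun b hb => h b (Finset.mem_cons_of_mem hb))

lemma sum_sets_nonempty {α : Type*} (F : Finset α) (f : α → Set (I → ℝ))
    (h : ∀ a ∈ F, (f a).Nonempty) : (∑ a ∈ F, f a).Nonempty := by
  induction F using Finset.cons_induction with
  | empty => exact ⟨0, rfl⟩
  | cons a F ha ih =>
    rw [Finset.sum_cons]
    exact ((h a (Finset.mem_cons_self a F)).add (ih fun b hb => h b (Finset.mem_cons_of_mem hb)))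

lemma sum_sets_subset {α : Type*} (F : Finset α) (f : α → Set (I → ℝ)) {C : Set (I → ℝ)}
    (h0 : (0 : I → ℝ) ∈ C) (hadd : ∀ x ∈ C, ∀ y ∈ C, x + y ∈ C)
    (h : ∀ a ∈ F, f a ⊆ C) : (∑ a ∈ F, f a) ⊆ C := by
  induction F using Finset.cons_induction with
  | empty => intro x hx; rw [show x = 0 from hx]; exact h0
  | cons a F ha ih =>
    rw [Finset.sum_cons]
    rintro x hx
    rw [Set.mem_add] at hx
    obtain ⟨y, hy, z, hz, rfl⟩ := hx
    exact hadd y (h a (Finset.mem_cons_self a F) hy) z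
      (ih (fun b hb => h b (Finset.mem_cons_of_mem hb)) hz)

lemma maxFace_subset {P : Set (I → ℝ)} {w : (I → ℝ) →ₗ[ℝ] ℝ} : maxFace P w ⊆ P :=
  fun _ hx => hx.1

lemma maxFace_nonempty {P : Set (I → ℝ)} (hc : IsCompact P) (hne : P.Nonempty)
    (w : (I → ℝ) →ₗ[ℝ] ℝ) : (maxFace P w).Nonempty := by
  obtain ⟨a, ha, hmax⟩ := hc.exists_isMaxOn hne
    (LinearMap.continuous_of_finiteDimensional w).continuousOn
  exact ⟨a, ha, fun y hy => hmax hy⟩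

lemma maxFace_add {P Q : Set (I → ℝ)} (hP : IsCompact P) (hPne : P.Nonempty)
    (hQ : IsCompact Q) (hQne : Q.Nonempty) (w : (I → ℝ) →ₗ[ℝ] ℝ) :
    maxFace (P + Q) w = maxFace P w + maxFace Q w := by
  obtain ⟨a0, ha0, hA⟩ := maxFace_nonempty hP hPne w
  obtain ⟨b0, hb0, hB⟩ := maxFace_nonempty hQ hQne w
  ext x
  constructor
  · rintro ⟨hx, hmax⟩
    rw [Set.mem_add] at hx
    obtain ⟨a, ha, b, hb, rfl⟩ := hx
    have h1 : w (a0 + b0) ≤ w (a + b) := hmax _ (Set.add_mem_add ha0 hb0)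
    rw [map_add, map_add] at h1
    have h2 : w a ≤ w a0 := hA a ha
    have h3 : w b ≤ w b0 := hB b hb
    refine Set.add_mem_add ⟨ha, fun y hy => ?_⟩ ⟨hb, fun y hy => ?_⟩
    · calc w y ≤ w a0 := hA y hy
        _ ≤ w a := by linarith
    · calc w y ≤ w b0 := hB y hy
        _ ≤ w b := by linarith
  · intro hx
    rw [Set.mem_add] at hx
    obtain ⟨a, ⟨ha, hamax⟩, b, ⟨hb, hbmax⟩, rfl⟩ := hx
    refine ⟨Set.add_mem_add ha hb, fun y hy => ?_⟩
    rw [Set.mem_add] at hy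
    obtain ⟨p, hp, q, hq, rfl⟩ := hy
    rw [map_add, map_add]
    exact add_le_add (hamax p hp) (hbmax q hq)

lemma maxFace_zero (w : (I → ℝ) →ₗ[ℝ] ℝ) : maxFace (0 : Set (I → ℝ)) w = 0 := by
  ext x
  constructor
  · rintro ⟨hx, -⟩; exact hx
  · rintro hx
    exact ⟨hx, fun y hy => by
      rw [show y = 0 from hy, show x = 0 from hx]⟩

lemma maxFace_sum {α : Type*} (F : Finset α) (f : α → Set (I → ℝ))
    (hc : ∀ a ∈ F, IsCompact (f a)) (hne : ∀ a ∈ F, (f a).Nonempty)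
    (w : (I → ℝ) →ₗ[ℝ] ℝ) :
    maxFace (∑ a ∈ F, f a) w = ∑ a ∈ F, maxFace (f a) w := by
  induction F using Finset.cons_induction with
  | empty => simpa using maxFace_zero w
  | cons a F ha ih =>
    rw [Finset.sum_cons, Finset.sum_cons,
      maxFace_add (hc a (Finset.mem_cons_self a F)) (hne a (Finset.mem_cons_self a F))
        (sum_sets_compact F f fun b hb => hc b (Finset.mem_cons_of_mem hb))
        (sum_sets_nonempty F f fun b hb => hne b (Finset.mem_cons_of_mem hb)) w,
      ih (fun b hb => hc b (Finset.mem_cons_of_mem hb))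
        (fun b hb => hne b (Finset.mem_cons_of_mem hb))]

/-- Recovery of the left factor of a face of a Minkowski sum. -/
lemma maxFace_left_recover {P Q : Set (I → ℝ)} (hP : IsCompact P) (hPne : P.Nonempty)
    (hQ : IsCompact Q) (hQne : Q.Nonempty) (w : (I → ℝ) →ₗ[ℝ] ℝ) :
    maxFace P w = {a ∈ P | ∃ b ∈ Q, a + b ∈ maxFace (P + Q) w} := by
  obtain ⟨a0, ha0, hA⟩ := maxFace_nonempty hP hPne w
  obtain ⟨b0, hb0, hB⟩ := maxFace_nonempty hQ hQne w
  ext a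
  constructor
  · rintro ⟨ha, hamax⟩
    refine ⟨ha, b0, hb0, Set.add_mem_add ha hb0, fun y hy => ?_⟩
    rw [Set.mem_add] at hy
    obtain ⟨p, hp, q, hq, rfl⟩ := hy
    rw [map_add, map_add]
    exact add_le_add (hamax p hp) (hB q hq)
  · rintro ⟨ha, b, hb, hmem, hmax⟩
    have h1 : w (a0 + b0) ≤ w (a + b) := hmax _ (Set.add_mem_add ha0 hb0)
    rw [map_add, map_add] at h1
    have h3 : w b ≤ w b0 := hB b hb
    refine ⟨ha, fun y hy => ?_⟩
    calc w y ≤ w a0 := hA y hy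
      _ ≤ w a := by linarith

end Aux2
section Aux3
set_option linter.unusedSectionVars false

/-- The set of indices in `J` on which `w` (evaluated on basis points) is maximal. -/
noncomputable def amax (w : (I → ℝ) →ₗ[ℝ] ℝ) (J : Finset I) : Finset I :=
  open Classical in J.filter (fun i => ∀ j ∈ J, w (npt j) ≤ w (npt i))

lemma amax_subset {w : (I → ℝ) →ₗ[ℝ] ℝ} {J : Finset I} : amax w J ⊆ J :=
  Finset.filter_subset _ _

lemma amax_nonempty {w : (I → ℝ) →ₗ[ℝ] ℝ} {J : Finset I} (hJ : J.Nonempty) :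
    (amax w J).Nonempty := by
  obtain ⟨i, hi, hmax⟩ := J.exists_max_image (fun i => w (npt i)) hJ
  exact ⟨i, Finset.mem_filter.2 ⟨hi, hmax⟩⟩

lemma maxFace_simplexOf (w : (I → ℝ) →ₗ[ℝ] ℝ) {J : Finset I} (hJ : J.Nonempty) :
    maxFace (simplexOf J) w = simplexOf (amax w J) := by
  obtain ⟨i0, hi0⟩ := amax_nonempty (w := w) hJ
  rw [amax, Finset.mem_filter] at hi0
  set m := w (npt i0) with hm
  -- every point of `simplexOf J` has value at most `m`
  have key : ∀ x ∈ simplexOf J, w x ≤ m ∧ (w x = m → ∀ i ∈ J, i ∉ amax w J → x i = 0) := by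
    intro x hx
    rw [mem_simplexOf] at hx
    obtain ⟨h0, hsupp, hsum⟩ := hx
    have hsum' : ∑ i ∈ J, x i = 1 := by
      rw [← hsum]
      exact Finset.sum_subset (Finset.subset_univ J) (fun i _ hi => hsupp i hi)
    have hw : w x = ∑ i ∈ J, x i * w (npt i) := by
      rw [w_eq_sum]
      exact (Finset.sum_subset (Finset.subset_univ J)
        (fun i _ hi => by rw [hsupp i hi, zero_mul])).symm
    have hle : ∀ i ∈ J, x i * w (npt i) ≤ x i * m :=
      fun i hi => mul_le_mul_of_nonneg_left (hi0.2 i hi) (h0 i)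
    have hwle : w x ≤ m := by
      rw [hw]
      calc ∑ i ∈ J, x i * w (npt i) ≤ ∑ i ∈ J, x i * m := Finset.sum_le_sum hle
        _ = m := by rw [← Finset.sum_mul, hsum', one_mul]
    refine ⟨hwle, fun heq i hi hnot => ?_⟩
    have hzero : ∀ i ∈ J, x i * (m - w (npt i)) = 0 := by
      have hsumzero : ∑ i ∈ J, x i * (m - w (npt i)) = 0 := by
        rw [Finset.sum_congr rfl (fun i _ => mul_sub (x i) m (w (npt i))),
          Finset.sum_sub_distrib, ← Finset.sum_mul, hsum', one_mul, ← hw, heq, sub_self]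
      intro i hi
      refine (Finset.sum_eq_zero_iff_of_nonneg (fun j hj => ?_)).1 hsumzero i hi
      exact mul_nonneg (h0 j) (by linarith [hi0.2 j hj])
    by_contra hxi
    have := hzero i hi
    have hne' : m - w (npt i) ≠ 0 := by
      intro hmeq
      apply hnot
      rw [amax, Finset.mem_filter]
      exact ⟨hi, fun j hj => by linarith [hi0.2 j hj, sub_eq_zero.1 hmeq]⟩
    exact hxi (by
      rcases mul_eq_zero.1 this with h | h
      · exact h
      · exact absurd h hne')
  -- every point of `simplexOf (amax w J)` has value exactly `m`
  have key2 : ∀ x ∈ simplexOf (amax w J), w x = m := by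
    intro x hx
    rw [mem_simplexOf] at hx
    obtain ⟨h0, hsupp, hsum⟩ := hx
    have hsum' : ∑ i ∈ amax w J, x i = 1 := by
      rw [← hsum]
      exact Finset.sum_subset (Finset.subset_univ _) (fun i _ hi => hsupp i hi)
    have hval : ∀ i ∈ amax w J, w (npt i) = m := by
      intro i hi
      rw [amax, Finset.mem_filter] at hi
      have h1 := hi.2 i0 hi0.1
      have h2 := hi0.2 i (amax_subset (Finset.mem_filter.2 hi))
      linarith
    rw [w_eq_sum]
    rw [← Finset.sum_subset (Finset.subset_univ (amax w J))
      (fun i _ hi => by rw [hsupp i hi, zero_mul])]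
    calc ∑ i ∈ amax w J, x i * w (npt i) = ∑ i ∈ amax w J, x i * m :=
        Finset.sum_congr rfl fun i hi => by rw [hval i hi]
      _ = m := by rw [← Finset.sum_mul, hsum', one_mul]
  ext x
  constructor
  · rintro ⟨hx, hmax⟩
    have hxm : w x = m := le_antisymm ((key x hx).1)
      (hmax (npt i0) (npt_mem_simplexOf.2 hi0.1))
    rw [mem_simplexOf] at hx ⊢
    refine ⟨hx.1, fun i hi => ?_, hx.2.2⟩
    by_cases hiJ : i ∈ J
    · exact (key x (mem_simplexOf.2 hx)).2 hxm i hiJ hi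
    · exact hx.2.1 i hiJ
  · intro hx
    refine ⟨simplexOf_mono amax_subset hx, fun y hy => ?_⟩
    rw [key2 x hx]
    exact (key y hy).1

/-- Linear functional from a coefficient vector. -/
noncomputable def wt (v : I → ℝ) : (I → ℝ) →ₗ[ℝ] ℝ := ∑ i, v i • (LinearMap.proj i)

lemma wt_apply (v x : I → ℝ) : wt v x = ∑ i, v i * x i := by
  simp [wt, LinearMap.proj]

lemma wt_npt (v : I → ℝ) (j : I) : wt v (npt j) = v j := by
  rw [wt_apply]
  simp [npt, Pi.single_apply]

lemma maxFace_congr {P : Set (I → ℝ)} {w w' : (I → ℝ) →ₗ[ℝ] ℝ}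
    (h : ∀ x ∈ P, w x = w' x) : maxFace P w = maxFace P w' := by
  ext x
  exact ⟨fun ⟨hx, hm⟩ => ⟨hx, fun y hy => by rw [← h x hx, ← h y hy]; exact hm y hy⟩,
    fun ⟨hx, hm⟩ => ⟨hx, fun y hy => by rw [h x hx, h y hy]; exact hm y hy⟩⟩

/-- Points of a nestohedron on sets contained in `S` are supported on `S`. -/
lemma nestohedron_supp {ℬ' : Finset (Finset I)} {S : Finset I} (h : ∀ J ∈ ℬ', J ⊆ S) :
    ∀ x ∈ nestohedron ℬ', ∀ i ∉ S, x i = 0 := by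
  intro x hx
  have : nestohedron ℬ' ⊆ {y : I → ℝ | ∀ i ∉ S, y i = 0} := by
    refine sum_sets_subset _ _ (fun i _ => rfl) (fun a ha b hb i hi => ?_) ?_
    · show a i + b i = 0
      rw [ha i hi, hb i hi, add_zero]
    · intro J hJ y hy i hi
      exact (mem_simplexOf.1 hy).2.1 i (fun hiJ => hi (h J hJ hiJ))
  exact this hx

end Aux3
section Aux4
set_option linter.unusedSectionVars false

lemma amax_eq_inter {w : (I → ℝ) →ₗ[ℝ] ℝ} {S J : Finset I}
    (hS : S = (amax w Finset.univ)ᶜ) (hJ : ¬ J ⊆ S) : amax w J = J ∩ Sᶜ := by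
  have hSc : Sᶜ = amax w Finset.univ := by rw [hS, compl_compl]
  obtain ⟨t, htJ, htS⟩ : ∃ t ∈ J, t ∉ S := by
    by_contra h
    push_neg at h
    exact hJ h
  have htT : t ∈ amax w Finset.univ := hSc ▸ Finset.mem_compl.2 htS
  rw [amax, Finset.mem_filter] at htT
  ext i
  constructor
  · intro hi
    rw [amax, Finset.mem_filter] at hi
    refine Finset.mem_inter.2 ⟨hi.1, ?_⟩
    rw [hSc, amax, Finset.mem_filter]
    exact ⟨Finset.mem_univ i, fun j _ => le_trans (htT.2 j (Finset.mem_univ j)) (hi.2 t htJ)⟩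
  · intro hi
    obtain ⟨hiJ, hiT⟩ := Finset.mem_inter.1 hi
    rw [hSc, amax, Finset.mem_filter] at hiT
    rw [amax, Finset.mem_filter]
    exact ⟨hiJ, fun j _ => hiT.2 j (Finset.mem_univ j)⟩

/-- Lemma A: the decomposition of an arbitrary face of the nestohedron. -/
lemma face_decomp (ℬ : Finset (Finset I)) (hne : ∀ J ∈ ℬ, J.Nonempty)
    (w : (I → ℝ) →ₗ[ℝ] ℝ) (S : Finset I) (hS : S = (amax w Finset.univ)ᶜ) :
    maxFace (nestohedron ℬ) w =
      (∑ J ∈ ℬ.filter (fun J => ¬ J ⊆ S), simplexOf (J ∩ Sᶜ)) +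
        maxFace (nestohedron (ℬ.filter (· ⊆ S))) w := by
  classical
  simp only [nestohedron]
  rw [← Finset.sum_filter_add_sum_filter_not ℬ (fun J => J ⊆ S) simplexOf]
  rw [maxFace_add
    (sum_sets_compact _ _ fun J _ => isCompact_simplexOf J)
    (sum_sets_nonempty _ _ fun J hJ => simplexOf_nonempty (hne J (Finset.mem_filter.1 hJ).1))
    (sum_sets_compact _ _ fun J _ => isCompact_simplexOf J)
    (sum_sets_nonempty _ _ fun J hJ => simplexOf_nonempty (hne J (Finset.mem_filter.1 hJ).1)) w]
  have hB : maxFace (∑ J ∈ ℬ.filter (fun J => ¬ J ⊆ S), simplexOf J) w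
      = ∑ J ∈ ℬ.filter (fun J => ¬ J ⊆ S), simplexOf (J ∩ Sᶜ) := by
    rw [maxFace_sum _ _ (fun J _ => isCompact_simplexOf J)
      (fun J hJ => simplexOf_nonempty (hne J (Finset.mem_filter.1 hJ).1)) w]
    refine Finset.sum_congr rfl fun J hJ => ?_
    rw [Finset.mem_filter] at hJ
    rw [maxFace_simplexOf w (hne J hJ.1), amax_eq_inter hS hJ.2]
  rw [hB, add_comm]

/-- Lemma B: realization of a prescribed pair as a face of the nestohedron. -/
lemma face_realize (ℬ : Finset (Finset I)) (hne : ∀ J ∈ ℬ, J.Nonempty)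
    (S : Finset I) (hS : S ≠ Finset.univ) (w' : (I → ℝ) →ₗ[ℝ] ℝ) :
    ∃ w : (I → ℝ) →ₗ[ℝ] ℝ, S = (amax w Finset.univ)ᶜ ∧
      maxFace (nestohedron (ℬ.filter (· ⊆ S))) w =
        maxFace (nestohedron (ℬ.filter (· ⊆ S))) w' ∧
      maxFace (nestohedron ℬ) w =
        (∑ J ∈ ℬ.filter (fun J => ¬ J ⊆ S), simplexOf (J ∩ Sᶜ)) +
          maxFace (nestohedron (ℬ.filter (· ⊆ S))) w' := by
  classical
  set C : ℝ := 1 + ∑ i, |w' (npt i)| with hC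
  have hlt : ∀ i : I, w' (npt i) < C := by
    intro i
    have h1 : |w' (npt i)| ≤ ∑ j, |w' (npt j)| :=
      Finset.single_le_sum (f := fun j => |w' (npt j)|) (fun j _ => abs_nonneg _)
        (Finset.mem_univ i)
    have := le_abs_self (w' (npt i))
    rw [hC]; linarith
  set v : I → ℝ := fun i => if i ∈ S then w' (npt i) else C with hv
  set w : (I → ℝ) →ₗ[ℝ] ℝ := wt v with hw
  obtain ⟨t0, ht0⟩ : ∃ t, t ∉ S := by
    by_contra h
    push_neg at h
    exact hS (Finset.eq_univ_iff_forall.2 h)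
  have hwv : ∀ i, w (npt i) = v i := fun i => wt_npt v i
  have hamax : amax w Finset.univ = Sᶜ := by
    ext i
    rw [amax, Finset.mem_filter, Finset.mem_compl]
    constructor
    · rintro ⟨-, hmax⟩
      intro hiS
      have := hmax t0 (Finset.mem_univ t0)
      rw [hwv, hwv, hv] at this
      simp only [if_pos hiS, if_neg ht0] at this
      exact absurd this (not_le.2 (hlt i))
    · intro hiS
      refine ⟨Finset.mem_univ i, fun j _ => ?_⟩
      rw [hwv, hwv, hv]
      simp only [if_neg hiS]
      by_cases hj : j ∈ S
      · rw [if_pos hj]; exact le_of_lt (hlt j)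
      · rw [if_neg hj]
  have hSeq : S = (amax w Finset.univ)ᶜ := by rw [hamax, compl_compl]
  have hcongr : maxFace (nestohedron (ℬ.filter (· ⊆ S))) w =
      maxFace (nestohedron (ℬ.filter (· ⊆ S))) w' := by
    refine maxFace_congr fun x hx => ?_
    have hsupp : ∀ i ∉ S, x i = 0 :=
      nestohedron_supp (fun J hJ => (Finset.mem_filter.1 hJ).2) x hx
    rw [hw, wt_apply, w_eq_sum w' x]
    refine Finset.sum_congr rfl fun i _ => ?_
    by_cases hi : i ∈ S
    · rw [hv]; simp only [if_pos hi]; ring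
    · rw [hsupp i hi, mul_zero, zero_mul]
  exact ⟨w, hSeq, hcongr, by rw [face_decomp ℬ hne w S hSeq, hcongr]⟩

/-- Lemma C: injectivity of the face decomposition. -/
lemma face_inj (ℬ : Finset (Finset I)) (hne : ∀ J ∈ ℬ, J.Nonempty)
    (hconn : (Finset.univ : Finset I) ∈ ℬ) (huniv : (Finset.univ : Finset I).Nonempty)
    {w₁ w₂ : (I → ℝ) →ₗ[ℝ] ℝ} {S₁ S₂ : Finset I}
    (h1 : S₁ = (amax w₁ Finset.univ)ᶜ) (h2 : S₂ = (amax w₂ Finset.univ)ᶜ)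
    (heq : maxFace (nestohedron ℬ) w₁ = maxFace (nestohedron ℬ) w₂) :
    S₁ = S₂ ∧ maxFace (nestohedron (ℬ.filter (· ⊆ S₁))) w₁ =
      maxFace (nestohedron (ℬ.filter (· ⊆ S₁))) w₂ := by
  classical
  -- recover the top simplex
  have hsplit : nestohedron ℬ =
      simplexOf Finset.univ + ∑ J ∈ ℬ.erase Finset.univ, simplexOf J := by
    rw [nestohedron, Finset.add_sum_erase _ _ hconn]
  have hcompR : IsCompact (∑ J ∈ ℬ.erase Finset.univ, simplexOf J) :=
    sum_sets_compact _ _ fun J _ => isCompact_simplexOf J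
  have hneR : (∑ J ∈ ℬ.erase Finset.univ, simplexOf J).Nonempty :=
    sum_sets_nonempty _ _ fun J hJ => simplexOf_nonempty (hne J (Finset.mem_of_mem_erase hJ))
  have hrec : ∀ w : (I → ℝ) →ₗ[ℝ] ℝ, maxFace (simplexOf Finset.univ) w =
      {a ∈ simplexOf Finset.univ | ∃ b ∈ ∑ J ∈ ℬ.erase Finset.univ, simplexOf J,
        a + b ∈ maxFace (nestohedron ℬ) w} := by
    intro w
    rw [hsplit]
    exact maxFace_left_recover (isCompact_simplexOf _) (simplexOf_nonempty huniv)
      hcompR hneR w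
  have hT : S₁ = S₂ := by
    have e1 := hrec w₁
    have e2 := hrec w₂
    rw [maxFace_simplexOf w₁ huniv] at e1
    rw [maxFace_simplexOf w₂ huniv] at e2
    rw [heq] at e1
    have : amax w₁ Finset.univ = amax w₂ Finset.univ :=
      simplexOf_injective (e1.trans e2.symm)
    rw [h1, h2, this]
  refine ⟨hT, ?_⟩
  -- recover the lower part
  have hsplit2 : nestohedron ℬ =
      nestohedron (ℬ.filter (· ⊆ S₁)) + ∑ J ∈ ℬ.filter (fun J => ¬ J ⊆ S₁), simplexOf J := by
    rw [nestohedron, nestohedron, Finset.sum_filter_add_sum_filter_not]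
  have hrec2 : ∀ w : (I → ℝ) →ₗ[ℝ] ℝ, maxFace (nestohedron (ℬ.filter (· ⊆ S₁))) w =
      {a ∈ nestohedron (ℬ.filter (· ⊆ S₁)) |
        ∃ b ∈ ∑ J ∈ ℬ.filter (fun J => ¬ J ⊆ S₁), simplexOf J,
          a + b ∈ maxFace (nestohedron ℬ) w} := by
    intro w
    rw [hsplit2]
    exact maxFace_left_recover
      (sum_sets_compact _ _ fun J _ => isCompact_simplexOf J)
      (sum_sets_nonempty _ _ fun J hJ => simplexOf_nonempty (hne J (Finset.mem_filter.1 hJ).1))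
      (sum_sets_compact _ _ fun J _ => isCompact_simplexOf J)
      (sum_sets_nonempty _ _ fun J hJ => simplexOf_nonempty (hne J (Finset.mem_filter.1 hJ).1)) w
  rw [hrec2 w₁, hrec2 w₂, heq]

end Aux4
section Aux5
set_option linter.unusedSectionVars false

lemma vectorSpan_set_add {A B : Set (I → ℝ)} (hA : A.Nonempty) (hB : B.Nonempty) :
    vectorSpan ℝ (A + B) = vectorSpan ℝ A ⊔ vectorSpan ℝ B := by
  obtain ⟨a0, ha0⟩ := hA
  obtain ⟨b0, hb0⟩ := hB
  refine le_antisymm ?_ (sup_le ?_ ?_)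
  · rw [vectorSpan_def, Submodule.span_le]
    rintro v hv
    rw [Set.mem_vsub] at hv
    obtain ⟨x, hx, y, hy, rfl⟩ := hv
    rw [Set.mem_add] at hx hy
    obtain ⟨a, ha, b, hb, rfl⟩ := hx
    obtain ⟨a', ha', b', hb', rfl⟩ := hy
    have : (a + b) -ᵥ (a' + b') = (a -ᵥ a') + (b -ᵥ b') := by
      show (a + b) - (a' + b') = (a - a') + (b - b')
      ring
    rw [this]
    exact Submodule.add_mem_sup (vsub_mem_vectorSpan ℝ ha ha') (vsub_mem_vectorSpan ℝ hb hb')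
  · rw [vectorSpan_def, vectorSpan_def]
    refine Submodule.span_mono ?_
    rintro v hv
    rw [Set.mem_vsub] at hv
    obtain ⟨x, hx, y, hy, rfl⟩ := hv
    rw [Set.mem_vsub]
    refine ⟨x + b0, Set.add_mem_add hx hb0, y + b0, Set.add_mem_add hy hb0, ?_⟩
    show (x + b0) - (y + b0) = x - y
    ring
  · rw [vectorSpan_def, vectorSpan_def]
    refine Submodule.span_mono ?_
    rintro v hv
    rw [Set.mem_vsub] at hv
    obtain ⟨x, hx, y, hy, rfl⟩ := hv
    rw [Set.mem_vsub]
    refine ⟨a0 + x, Set.add_mem_add ha0 hx, a0 + y, Set.add_mem_add ha0 hy, ?_⟩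
    show (a0 + x) - (a0 + y) = x - y
    ring

lemma vectorSpan_sum_sets {α : Type*} (F : Finset α) (f : α → Set (I → ℝ))
    (h : ∀ a ∈ F, (f a).Nonempty) :
    vectorSpan ℝ (∑ a ∈ F, f a) = F.sup (fun a => vectorSpan ℝ (f a)) := by
  induction F using Finset.cons_induction with
  | empty =>
    rw [Finset.sum_empty, Finset.sup_empty]
    show vectorSpan ℝ ({0} : Set (I → ℝ)) = ⊥
    exact vectorSpan_singleton ℝ 0
  | cons a F ha ih =>
    rw [Finset.sum_cons, Finset.sup_cons,
      vectorSpan_set_add (h a (Finset.mem_cons_self a F))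
        (sum_sets_nonempty _ _ fun b hb => h b (Finset.mem_cons_of_mem hb)),
      ih fun b hb => h b (Finset.mem_cons_of_mem hb)]

/-- The submodule of functions supported on `S`. -/
def suppM (S : Finset I) : Submodule ℝ (I → ℝ) where
  carrier := {x | ∀ i ∉ S, x i = 0}
  add_mem' := by
    intro a b ha hb i hi
    show a i + b i = 0
    rw [ha i hi, hb i hi, add_zero]
  zero_mem' := fun i _ => rfl
  smul_mem' := fun c x hx i hi => by
    show c * x i = 0
    rw [hx i hi, mul_zero]

lemma suppM_inf_compl (S : Finset I) : suppM S ⊓ suppM Sᶜ = ⊥ := by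
  rw [eq_bot_iff]
  rintro x ⟨hx1, hx2⟩
  have : x = 0 := by
    funext i
    by_cases hi : i ∈ S
    · exact hx2 i (by simp [hi])
    · exact hx1 i hi
  simp [this]

lemma vectorSpan_le_suppM {A : Set (I → ℝ)} {S : Finset I}
    (h : ∀ x ∈ A, ∀ i ∉ S, x i = 0) : vectorSpan ℝ A ≤ suppM S := by
  rw [vectorSpan_def, Submodule.span_le]
  rintro v hv
  rw [Set.mem_vsub] at hv
  obtain ⟨x, hx, y, hy, rfl⟩ := hv
  intro i hi
  show x i - y i = 0
  rw [h x hx i hi, h y hy i hi, sub_zero]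

lemma vectorSpan_simplexOf (K : Finset I) :
    vectorSpan ℝ (simplexOf K) =
      vectorSpan ℝ ((fun j => Pi.single j (1 : ℝ)) '' (↑K : Set I)) := by
  rw [← direction_affineSpan, ← direction_affineSpan, simplexOf, affineSpan_convexHull]

lemma affineIndependent_npt : AffineIndependent ℝ (npt : I → I → ℝ) := by
  rw [affineIndependent_iff]
  intro s w _ hsum e he
  have := congrFun hsum e
  rw [Finset.sum_apply] at this
  simp only [npt, Pi.smul_apply, Pi.single_apply, smul_eq_mul, mul_ite, mul_one,
    mul_zero] at this
  rw [Pi.zero_apply, Finset.sum_ite_eq s e w, if_pos he] at this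
  exact this

lemma finrank_vectorSpan_npt {T : Finset I} (hT : T.Nonempty) :
    Module.finrank ℝ ↥(vectorSpan ℝ ((fun j => Pi.single j (1 : ℝ)) '' (↑T : Set I))) =
      T.card - 1 := by
  have hc : T.card = (T.card - 1) + 1 := (Nat.succ_pred_eq_of_pos (Finset.card_pos.2 hT)).symm
  have := affineIndependent_npt.finrank_vectorSpan_image_finset (k := ℝ) (s := T)
    (n := T.card - 1) hc
  rw [Finset.coe_image] at this
  exact this

/-- The key dimension computation. -/
lemma polyDim_Q_add {S : Finset I} (hS : S ≠ Finset.univ) (ℬ : Finset (Finset I))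
    (hconn : (Finset.univ : Finset I) ∈ ℬ) {F : Set (I → ℝ)} (hF : F.Nonempty)
    (hFsub : ∀ x ∈ F, ∀ i ∉ S, x i = 0) :
    polyDim ((∑ J ∈ ℬ.filter (fun J => ¬ J ⊆ S), simplexOf (J ∩ Sᶜ)) + F) =
      (Sᶜ.card - 1) + polyDim F := by
  classical
  set Q : Set (I → ℝ) := ∑ J ∈ ℬ.filter (fun J => ¬ J ⊆ S), simplexOf (J ∩ Sᶜ) with hQdef
  have hmemJ : ∀ J ∈ ℬ.filter (fun J => ¬ J ⊆ S), (J ∩ Sᶜ).Nonempty := by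
    intro J hJ
    rw [Finset.mem_filter] at hJ
    obtain ⟨t, htJ, htS⟩ : ∃ t ∈ J, t ∉ S := by
      by_contra h
      push_neg at h
      exact hJ.2 h
    exact ⟨t, Finset.mem_inter.2 ⟨htJ, Finset.mem_compl.2 htS⟩⟩
  have hQne : Q.Nonempty := sum_sets_nonempty _ _ fun J hJ => simplexOf_nonempty (hmemJ J hJ)
  have huniv_mem : (Finset.univ : Finset I) ∈ ℬ.filter (fun J => ¬ J ⊆ S) := by
    rw [Finset.mem_filter]
    exact ⟨hconn, fun h => hS (Finset.eq_univ_iff_forall.2 fun i => h (Finset.mem_univ i))⟩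
  have hScne : Sᶜ.Nonempty := by
    rw [← Finset.card_pos, Finset.card_compl]
    have : S.card < Fintype.card I := (Finset.card_lt_iff_ne_univ S).2 hS
    omega
  -- vectorSpan of Q equals vectorSpan of the big simplex on Sᶜ
  have hQspan : vectorSpan ℝ Q =
      vectorSpan ℝ ((fun j => Pi.single j (1 : ℝ)) '' (↑(Sᶜ) : Set I)) := by
    rw [hQdef, vectorSpan_sum_sets _ _ fun J hJ => simplexOf_nonempty (hmemJ J hJ)]
    refine le_antisymm (Finset.sup_le fun J hJ => ?_) ?_
    · rw [vectorSpan_simplexOf]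
      exact vectorSpan_mono ℝ (Set.image_mono (by
        exact_mod_cast Finset.inter_subset_right))
    · have h2 : vectorSpan ℝ ((fun j => Pi.single j (1 : ℝ)) '' (↑(Sᶜ) : Set I)) =
          vectorSpan ℝ (simplexOf (Finset.univ ∩ Sᶜ)) := by
        rw [Finset.univ_inter, vectorSpan_simplexOf]
      rw [h2]
      exact Finset.le_sup (f := fun J => vectorSpan ℝ (simplexOf (J ∩ Sᶜ))) huniv_mem
  have hQsupp : vectorSpan ℝ Q ≤ suppM Sᶜ := by
    refine vectorSpan_le_suppM fun x hx i hi => ?_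
    have : Q ⊆ {y : I → ℝ | ∀ i ∉ Sᶜ, y i = 0} := by
      refine sum_sets_subset _ _ (fun i _ => rfl) (fun a ha b hb i hi => ?_) ?_
      · show a i + b i = 0
        rw [ha i hi, hb i hi, add_zero]
      · intro J hJ y hy j hj
        exact (mem_simplexOf.1 hy).2.1 j fun hmem =>
          hj (Finset.mem_of_mem_inter_right hmem)
    exact this hx i hi
  have hFsupp : vectorSpan ℝ F ≤ suppM S := vectorSpan_le_suppM hFsub
  have hinf : vectorSpan ℝ Q ⊓ vectorSpan ℝ F = ⊥ := by
    rw [eq_bot_iff]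
    calc vectorSpan ℝ Q ⊓ vectorSpan ℝ F ≤ suppM Sᶜ ⊓ suppM S := inf_le_inf hQsupp hFsupp
      _ = suppM S ⊓ suppM Sᶜ := inf_comm _ _
      _ = ⊥ := suppM_inf_compl S
  have hspan := vectorSpan_set_add hQne hF
  have hrk := Submodule.finrank_sup_add_finrank_inf_eq (vectorSpan ℝ Q) (vectorSpan ℝ F)
  rw [hinf, finrank_bot, add_zero] at hrk
  have hQrank : Module.finrank ℝ ↥(vectorSpan ℝ Q) = Sᶜ.card - 1 := by
    rw [hQspan]
    exact finrank_vectorSpan_npt hScne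
  rw [polyDim, polyDim, hspan, hrk, hQrank]

end Aux5
section Aux6
set_option linter.unusedSectionVars false
set_option maxHeartbeats 1000000

lemma isCompact_nestohedron (ℬ' : Finset (Finset I)) : IsCompact (nestohedron ℬ') :=
  sum_sets_compact _ _ fun J _ => isCompact_simplexOf J

lemma nestohedron_nonempty (ℬ' : Finset (Finset I)) (hne : ∀ J ∈ ℬ', J.Nonempty) :
    (nestohedron ℬ').Nonempty :=
  sum_sets_nonempty _ _ fun J hJ => simplexOf_nonempty (hne J hJ)

lemma Q_nonempty (ℬ' : Finset (Finset I)) (S : Finset I) :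
    (∑ J ∈ ℬ'.filter (fun J => ¬ J ⊆ S), simplexOf (J ∩ Sᶜ)).Nonempty := by
  refine sum_sets_nonempty _ _ fun J hJ => simplexOf_nonempty ?_
  rw [Finset.mem_filter] at hJ
  obtain ⟨t, htJ, htS⟩ : ∃ t ∈ J, t ∉ S := by
    by_contra h
    push_neg at h
    exact hJ.2 h
  exact ⟨t, Finset.mem_inter.2 ⟨htJ, Finset.mem_compl.2 htS⟩⟩

lemma faces_finite (ℬ' : Finset (Finset I)) (hne : ∀ J ∈ ℬ', J.Nonempty) :
    {F : Set (I → ℝ) | (∃ w, F = maxFace (nestohedron ℬ') w) ∧ F.Nonempty}.Finite := by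
  have hsub : {F : Set (I → ℝ) | (∃ w, F = maxFace (nestohedron ℬ') w) ∧ F.Nonempty} ⊆
      (fun g : Finset I → Finset I => ∑ J ∈ ℬ', simplexOf (g J)) '' Set.univ := by
    rintro F ⟨⟨w, rfl⟩, -⟩
    refine ⟨fun J => amax w J, Set.mem_univ _, ?_⟩
    show (∑ J ∈ ℬ', simplexOf (amax w J)) = maxFace (nestohedron ℬ') w
    rw [nestohedron, maxFace_sum _ _ (fun J _ => isCompact_simplexOf J)
      (fun J hJ => simplexOf_nonempty (hne J hJ)) w]
    exact Finset.sum_congr rfl fun J hJ => (maxFace_simplexOf w (hne J hJ)).symm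
  exact (Set.finite_univ.image _).subset hsub

lemma mem_faces_iff (ℬ' : Finset (Finset I)) (hne : ∀ J ∈ ℬ', J.Nonempty)
    (F : Set (I → ℝ)) :
    ((∃ w, F = maxFace (nestohedron ℬ') w) ∧ F.Nonempty) ↔
      ∃ w, F = maxFace (nestohedron ℬ') w := by
  constructor
  · rintro ⟨h, -⟩; exact h
  · rintro ⟨w, rfl⟩
    exact ⟨⟨w, rfl⟩, maxFace_nonempty (isCompact_nestohedron ℬ')
      (nestohedron_nonempty ℬ' hne) w⟩

lemma fPoly_eq_sum (ℬ' : Finset (Finset I)) (hne : ∀ J ∈ ℬ', J.Nonempty) :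
    fPoly (nestohedron ℬ') =
      ∑ F ∈ (faces_finite ℬ' hne).toFinset, Polynomial.X ^ polyDim F := by
  have h := finsum_mem_coe_finset (fun F : Set (I → ℝ) => (Polynomial.X ^ polyDim F : Polynomial ℝ))
    (faces_finite ℬ' hne).toFinset
  rw [Set.Finite.coe_toFinset] at h
  rw [fPoly]
  exact h

end Aux6

/-- For a connected building set `ℬ` on `I` with `|I| ≥ 2`, the `f`-polynomial of the
nestohedron `N_ℬ` satisfies `f_ℬ(t) = Σ_{S ⊊ I} t^{|I|−|S|−1} f_{ℬ|_S}(t)`, where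
`ℬ|_S = {A ∈ ℬ : A ⊆ S}`. -/
theorem stmt8 (ℬ : Finset (Finset I)) (hB : IsBuildingSet ℬ)
    (hconn : (Finset.univ : Finset I) ∈ ℬ) (hI : 2 ≤ Fintype.card I) :
    fPoly (nestohedron ℬ) =
      ∑ S ∈ (Finset.univ : Finset I).powerset.erase Finset.univ,
        Polynomial.X ^ (Fintype.card I - S.card - 1) *
          fPoly (nestohedron (ℬ.filter (· ⊆ S))) := by
  classical
  obtain ⟨hsing, hempty, -⟩ := hB
  have hne : ∀ J ∈ ℬ, J.Nonempty := fun J hJ =>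
    Finset.nonempty_iff_ne_empty.2 fun h => hempty (h ▸ hJ)
  have hNI : Nonempty I := Fintype.card_pos_iff.mp (by omega)
  have huniv : (Finset.univ : Finset I).Nonempty := Finset.univ_nonempty
  have hneS : ∀ S : Finset I, ∀ J ∈ ℬ.filter (· ⊆ S), J.Nonempty := fun S J hJ =>
    hne J (Finset.mem_filter.1 hJ).1
  have hFsupp : ∀ (S : Finset I) (F : Set (I → ℝ)),
      F ⊆ nestohedron (ℬ.filter (· ⊆ S)) → ∀ x ∈ F, ∀ i ∉ S, x i = 0 := by
    intro S F hFsub x hx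
    exact nestohedron_supp (fun J hJ => (Finset.mem_filter.1 hJ).2) x (hFsub hx)
  rw [fPoly_eq_sum ℬ hne]
  calc (∑ G ∈ (faces_finite ℬ hne).toFinset, Polynomial.X ^ polyDim G)
      = ∑ p ∈ ((Finset.univ : Finset I).powerset.erase Finset.univ).sigma
          (fun S => (faces_finite (ℬ.filter (· ⊆ S)) (hneS S)).toFinset),
          Polynomial.X ^ ((Fintype.card I - p.1.card - 1) + polyDim p.2) := by
        refine (Finset.sum_bij
          (fun (p : (S : Finset I) × Set (I → ℝ)) _ =>
            (∑ J ∈ ℬ.filter (fun J => ¬ J ⊆ p.1), simplexOf (J ∩ p.1ᶜ)) + p.2)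
          ?_ ?_ ?_ ?_).symm
        · -- membership
          rintro ⟨S, F⟩ hp
          rw [Finset.mem_sigma] at hp
          obtain ⟨hS, hF⟩ := hp
          rw [Finset.mem_erase] at hS
          rw [Set.Finite.mem_toFinset] at hF
          dsimp only at hS hF ⊢
          obtain ⟨⟨w', hw'⟩, -⟩ := hF
          obtain ⟨w, hw1, hw2, hw3⟩ := face_realize ℬ hne S hS.1 w'
          rw [Set.Finite.mem_toFinset]
          refine ⟨⟨w, by rw [hw3, hw']⟩, ?_⟩
          obtain ⟨q, hq⟩ := Q_nonempty ℬ S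
          obtain ⟨f, hf⟩ := maxFace_nonempty (isCompact_nestohedron _)
            (nestohedron_nonempty _ (hneS S)) w'
          exact ⟨q + f, Set.add_mem_add hq (by rw [hw']; exact hf)⟩
        · -- injectivity
          rintro ⟨S₁, F₁⟩ hp₁ ⟨S₂, F₂⟩ hp₂ h
          rw [Finset.mem_sigma] at hp₁ hp₂
          obtain ⟨hS₁, hF₁⟩ := hp₁
          obtain ⟨hS₂, hF₂⟩ := hp₂
          rw [Finset.mem_erase] at hS₁ hS₂
          rw [Set.Finite.mem_toFinset] at hF₁ hF₂
          dsimp only at hS₁ hS₂ hF₁ hF₂ h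
          obtain ⟨⟨w₁', hw₁'⟩, -⟩ := hF₁
          obtain ⟨⟨w₂', hw₂'⟩, -⟩ := hF₂
          obtain ⟨w₁, ha1, hb1, hc1⟩ := face_realize ℬ hne S₁ hS₁.1 w₁'
          obtain ⟨w₂, ha2, hb2, hc2⟩ := face_realize ℬ hne S₂ hS₂.1 w₂'
          rw [← hw₁'] at hc1
          rw [← hw₂'] at hc2
          have heq : maxFace (nestohedron ℬ) w₁ = maxFace (nestohedron ℬ) w₂ := by
            rw [hc1, hc2]
            exact h
          obtain ⟨hSeq, hFeq⟩ := face_inj ℬ hne hconn huniv ha1 ha2 heq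
          subst hSeq
          have : F₁ = F₂ := by
            rw [hw₁', hw₂', ← hb1, ← hb2, hFeq]
          rw [this]
        · -- surjectivity
          rintro G hG
          rw [Set.Finite.mem_toFinset] at hG
          obtain ⟨⟨w, rfl⟩, -⟩ := hG
          set S : Finset I := (amax w Finset.univ)ᶜ with hSdef
          have hSne : S ≠ Finset.univ := by
            rw [hSdef, Ne, Finset.compl_eq_univ_iff]
            intro h
            exact Finset.not_nonempty_empty (h ▸ amax_nonempty huniv)
          refine ⟨⟨S, maxFace (nestohedron (ℬ.filter (· ⊆ S))) w⟩, ?_, ?_⟩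
          · rw [Finset.mem_sigma, Finset.mem_erase, Set.Finite.mem_toFinset]
            exact ⟨⟨hSne, Finset.mem_powerset.2 (Finset.subset_univ S)⟩, ⟨w, rfl⟩,
              maxFace_nonempty (isCompact_nestohedron _)
                (nestohedron_nonempty _ (hneS S)) w⟩
          · exact (face_decomp ℬ hne w S hSdef).symm
        · -- values
          rintro ⟨S, F⟩ hp
          rw [Finset.mem_sigma] at hp
          obtain ⟨hS, hF⟩ := hp
          rw [Finset.mem_erase] at hS
          rw [Set.Finite.mem_toFinset] at hF
          dsimp only at hS hF ⊢
          obtain ⟨⟨w', hw'⟩, hFne⟩ := hF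
          have hsub : F ⊆ nestohedron (ℬ.filter (· ⊆ S)) := by
            rw [hw']
            exact maxFace_subset
          have hdim := polyDim_Q_add hS.1 ℬ hconn hFne (hFsupp S F hsub)
          show Polynomial.X ^ ((Fintype.card I - S.card - 1) + polyDim F) = _
          rw [hdim, Finset.card_compl]
    _ = ∑ S ∈ (Finset.univ : Finset I).powerset.erase Finset.univ,
          ∑ F ∈ (faces_finite (ℬ.filter (· ⊆ S)) (hneS S)).toFinset,
            Polynomial.X ^ ((Fintype.card I - S.card - 1) + polyDim F) :=
        Finset.sum_sigma _ _ _
    _ = ∑ S ∈ (Finset.univ : Finset I).powerset.erase Finset.univ,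
          Polynomial.X ^ (Fintype.card I - S.card - 1) *
            fPoly (nestohedron (ℬ.filter (· ⊆ S))) := by
        refine Finset.sum_congr rfl fun S hS => ?_
        rw [fPoly_eq_sum _ (hneS S), Finset.mul_sum]
        exact Finset.sum_congr rfl fun F _ => pow_add _ _ _
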